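/- Fix t ≥ 1 and δ ∈ ℕ. Let G be a finite simple graph and let U ⊆ V(G) be a set of exactly t vertices that are pairwise δ-near-twins. If some vertex v ∈ U has degree at least (t−1)·δ + 2t in G, then G contains K_{t,t} as a subgraph. -/

import Mathlib

open scoped symmDiff

lemma aux_biUnion_ncard {α β : Type*} [Finite β] (F : Finset α) (f : α → Set β) (δ : ℕ)
    (h : ∀ a ∈ F, (f a).ncard ≤ δ) : (⋃ a ∈ F, f a).ncard ≤ F.card * δ := by
  classical
  induction F using Finset.induction with
  | empty => simp
  | @insert a s hx ih =>
    rw [Finset.set_biUnion_insert, Finset.card_insert_of_notMem hx, add_mul, one_mul]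
    calc (f a ∪ ⋃ x ∈ s, f x).ncard ≤ (f a).ncard + (⋃ x ∈ s, f x).ncard :=
          Set.ncard_union_le _ _
      _ ≤ δ + s.card * δ := by
          gcongr
          · exact h a (Finset.mem_insert_self a s)
          · exact ih fun b hb => h b (Finset.mem_insert_of_mem hb)
      _ = s.card * δ + δ := by ring

/-- If `U` is a set of exactly `t ≥ 1` vertices that are pairwise `δ`-near-twins, and
some `v ∈ U` has degree at least `(t - 1) * δ + 2 * t`, then `G` contains `K_{t,t}`
as a subgraph. -/
theorem stmt14 {V : Type*} [Fintype V] (t δ : ℕ) (ht : 1 ≤ t) (G : SimpleGraph V)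
    (U : Set V) (hcard : U.ncard = t)
    (htwins : U.Pairwise fun u v =>
      ((G.neighborSet u) ∆ (G.neighborSet v)).ncard ≤ δ)
    (v : V) (hv : v ∈ U) (hdeg : (t - 1) * δ + 2 * t ≤ (G.neighborSet v).ncard) :
    ∃ S T : Finset V, Disjoint S T ∧ S.card = t ∧ T.card = t ∧
      ∀ s ∈ S, ∀ u ∈ T, G.Adj s u := by
  classical
  have hUfin : U.Finite := Set.toFinite U
  set N := G.neighborSet with hN
  -- Finset of U minus v
  set F : Finset V := (hUfin.diff (t := {v})).toFinset with hF
  have hFcard : F.card = t - 1 := by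
    rw [hF, ← Set.ncard_eq_toFinset_card _ (hUfin.diff (t := {v})),
      Set.ncard_diff_singleton_of_mem hv, hcard]
  set D : Set V := ⋃ u ∈ F, (N u ∆ N v) with hD
  have hDcard : D.ncard ≤ (t - 1) * δ := by
    rw [← hFcard]
    apply aux_biUnion_ncard
    intro a ha
    rw [hF, Set.Finite.mem_toFinset] at ha
    exact htwins ha.1 hv ha.2
  set W : Set V := N v \ (U ∪ D) with hW
  have hWcard : t ≤ W.ncard := by
    have h1 : (N v).ncard ≤ W.ncard + (U ∪ D).ncard := by
      calc (N v).ncard ≤ (W ∪ (U ∪ D)).ncard :=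
            Set.ncard_le_ncard (fun x hx => by
              by_cases hxu : x ∈ U ∪ D
              · exact Or.inr hxu
              · exact Or.inl ⟨hx, hxu⟩) (Set.toFinite _)
        _ ≤ W.ncard + (U ∪ D).ncard := Set.ncard_union_le _ _
    have h2 : (U ∪ D).ncard ≤ t + (t - 1) * δ := by
      calc (U ∪ D).ncard ≤ U.ncard + D.ncard := Set.ncard_union_le _ _
        _ ≤ t + (t - 1) * δ := by rw [hcard]; omega
    omega
  -- choose T ⊆ W with card t
  have hWle : t ≤ (Set.toFinite W).toFinset.card := by
    rwa [← Set.ncard_eq_toFinset_card _ (Set.toFinite W)]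
  obtain ⟨T, hTW, hTcard⟩ := Finset.exists_subset_card_eq hWle
  set S : Finset V := hUfin.toFinset with hS
  have hScard : S.card = t := by
    rw [hS, ← Set.ncard_eq_toFinset_card _ hUfin, hcard]
  have hTW' : ∀ x ∈ T, x ∈ W := by
    intro x hx
    have := hTW hx
    rwa [Set.Finite.mem_toFinset] at this
  refine ⟨S, T, ?_, hScard, hTcard, ?_⟩
  · rw [Finset.disjoint_left]
    intro a haS haT
    have haU : a ∈ U := by rwa [hS, Set.Finite.mem_toFinset] at haS
    exact (hTW' a haT).2 (Or.inl haU)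
  · intro s hs w hw
    have hsU : s ∈ U := by rwa [hS, Set.Finite.mem_toFinset] at hs
    have hwW := hTW' w hw
    have hwNv : w ∈ N v := hwW.1
    by_cases hsv : s = v
    · subst hsv; exact hwNv
    · have hsF : s ∈ F := by rw [hF, Set.Finite.mem_toFinset]; exact ⟨hsU, hsv⟩
      have hnd : w ∉ N s ∆ N v := by
        intro hcon
        exact hwW.2 (Or.inr (Set.mem_biUnion hsF hcon))
      rw [Set.mem_symmDiff] at hnd
      push_neg at hnd
      have : w ∈ N s := hnd.2 hwNv
      exact this
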